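/- Bisimilarity of C/E nets with boundaries is a congruence with respect to the tensor product ⊗, and both the strong and the weak bisimilarity of P/T nets with boundaries are congruences with respect to composition ';' and tensor ⊗: tensoring two bisimilar C/E nets with the same C/E net (on either side) yields bisimilar nets, and for P/T nets, composing or tensoring two (strongly, resp. weakly) bisimilar nets with the same net, on either side, yields (strongly, resp. weakly) bisimilar nets. -/

import Mathlib

/-- A C/E net with boundaries `m → n` (contention given as a plain relation;
the well-formedness conditions are collected in `CENet.Valid`). -/
structure CENet (m n : ℕ) : Type 1 where
  P : Type
  T : Type
  pre : T → Set P
  post : T → Set P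
  src : T → Set (Fin m)
  tgt : T → Set (Fin n)
  conten : T → T → Prop

namespace CENet

variable {k l m n : ℕ}

def preS (N : CENet m n) (U : Set N.T) : Set N.P := ⋃ t ∈ U, N.pre t
def postS (N : CENet m n) (U : Set N.T) : Set N.P := ⋃ t ∈ U, N.post t
def srcS (N : CENet m n) (U : Set N.T) : Set (Fin m) := ⋃ t ∈ U, N.src t
def tgtS (N : CENet m n) (U : Set N.T) : Set (Fin n) := ⋃ t ∈ U, N.tgt t

/-- A set of transitions is mutually independent when no two distinct
members are in contention. -/
def MutInd (N : CENet m n) (U : Set N.T) : Prop :=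
  ∀ t ∈ U, ∀ u ∈ U, t ≠ u → ¬ N.conten t u

/-- Well-formedness of a C/E net with boundaries: finiteness, the contention
relation is symmetric, irreflexive and contains all non-independent pairs and
all pairs sharing a boundary port, and transitions have distinct footprints. -/
def Valid (N : CENet m n) : Prop :=
  Finite N.P ∧ Finite N.T ∧
  (∀ t u : N.T, N.conten t u → N.conten u t) ∧
  (∀ t : N.T, ¬ N.conten t t) ∧
  (∀ t u : N.T, t ≠ u → (N.pre t ∩ N.pre u).Nonempty → N.conten t u) ∧
  (∀ t u : N.T, t ≠ u → (N.post t ∩ N.post u).Nonempty → N.conten t u) ∧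
  (∀ t u : N.T, t ≠ u → (N.src t ∩ N.src u).Nonempty → N.conten t u) ∧
  (∀ t u : N.T, t ≠ u → (N.tgt t ∩ N.tgt u).Nonempty → N.conten t u) ∧
  (∀ t u : N.T, N.pre t = N.pre u → N.post t = N.post u →
     N.src t = N.src u → N.tgt t = N.tgt u → t = u)

/-- C/E firing: `N_X →_U N_Y`. -/
def Fire (N : CENet m n) (X : Set N.P) (U : Set N.T) (Y : Set N.P) : Prop :=
  N.MutInd U ∧ N.preS U ⊆ X ∧ N.postS U ∩ X = ∅ ∧
    Y = (X \ N.preS U) ∪ N.postS U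

/-- Labelled semantics of C/E nets with boundaries (labels as subsets of
ports, i.e. elements of `{0,1}^m` via characteristic functions). -/
def Lts (N : CENet m n) (X : Set N.P) (α : Set (Fin m)) (β : Set (Fin n))
    (Y : Set N.P) : Prop :=
  ∃ U : Set N.T, N.Fire X U Y ∧ α = N.srcS U ∧ β = N.tgtS U

/-- Synchronisation between C/E nets with a common boundary. -/
def Synch (M : CENet l m) (N : CENet m n) (U : Set M.T) (V : Set N.T) : Prop :=
  M.MutInd U ∧ N.MutInd V ∧ ¬(U = ∅ ∧ V = ∅) ∧ M.tgtS U = N.srcS V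

/-- Minimal synchronisation. -/
def MinSynch (M : CENet l m) (N : CENet m n) (U : Set M.T) (V : Set N.T) : Prop :=
  Synch M N U V ∧
    ∀ U' V', Synch M N U' V' → U' ⊆ U → V' ⊆ V → U' = U ∧ V' = V

end CENet
namespace CENet

variable {k l m n : ℕ}

/-- Tensor product of C/E nets with boundaries. -/
def tensor (M : CENet k l) (N : CENet m n) : CENet (k + m) (l + n) where
  P := M.P ⊕ N.P
  T := M.T ⊕ N.T
  pre := Sum.elim (fun t => Sum.inl '' M.pre t) (fun t => Sum.inr '' N.pre t)
  post := Sum.elim (fun t => Sum.inl '' M.post t) (fun t => Sum.inr '' N.post t)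
  src := Sum.elim (fun t => Fin.castAdd m '' M.src t) (fun t => Fin.natAdd k '' N.src t)
  tgt := Sum.elim (fun t => Fin.castAdd n '' M.tgt t) (fun t => Fin.natAdd l '' N.tgt t)
  conten s t :=
    (∃ a b, s = Sum.inl a ∧ t = Sum.inl b ∧ M.conten a b) ∨
    (∃ a b, s = Sum.inr a ∧ t = Sum.inr b ∧ N.conten a b)

end CENet
namespace CENet

/-- Combined marking on a disjoint union of places. -/
def mk2 {A B : Type} (X : Set A) (Y : Set B) : Set (A ⊕ B) :=
  Sum.inl '' X ∪ Sum.inr '' Y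

end CENet

/-- A P/T net with boundaries `m → n` (well-formedness in `PTNet.Valid`). -/
structure PTNet (m n : ℕ) : Type 1 where
  P : Type
  T : Type
  pre : T → Multiset P
  post : T → Multiset P
  src : T → Multiset (Fin m)
  tgt : T → Multiset (Fin n)

namespace PTNet

variable {k l m n : ℕ}

/-- Linear extension of `pre` to multisets of transitions. -/
def preM (N : PTNet m n) (U : Multiset N.T) : Multiset N.P := (U.map N.pre).sum
def postM (N : PTNet m n) (U : Multiset N.T) : Multiset N.P := (U.map N.post).sum
def srcM (N : PTNet m n) (U : Multiset N.T) : Multiset (Fin m) := (U.map N.src).sum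
def tgtM (N : PTNet m n) (U : Multiset N.T) : Multiset (Fin n) := (U.map N.tgt).sum

/-- Well-formedness: finiteness and distinct footprints. -/
def Valid (N : PTNet m n) : Prop :=
  Finite N.P ∧ Finite N.T ∧
  ∀ t u : N.T, N.pre t = N.pre u → N.post t = N.post u →
    N.src t = N.src u → N.tgt t = N.tgt u → t = u

/-- Strong firing of P/T nets: `N_X →_U N_Y`. -/
def SFire (N : PTNet m n) (X : Multiset N.P) (U : Multiset N.T)
    (Y : Multiset N.P) : Prop :=
  letI := Classical.decEq N.P
  N.preM U ≤ X ∧ N.postM U ≤ Y ∧ X - N.preM U = Y - N.postM U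

/-- Weak (banking) firing of P/T nets: `N_X ⇒_U N_Y`. -/
def WFire (N : PTNet m n) (X : Multiset N.P) (U : Multiset N.T)
    (Y : Multiset N.P) : Prop :=
  Y + N.preM U = X + N.postM U

/-- Characteristic function `χ : Multiset (Fin k) → ℕ^k`. -/
def chiM {k : ℕ} (M : Multiset (Fin k)) : Fin k → ℕ := fun i => M.count i

/-- Strong labelled semantics of P/T nets with boundaries. -/
def SLts (N : PTNet m n) (X : Multiset N.P) (α : Fin m → ℕ) (β : Fin n → ℕ)
    (Y : Multiset N.P) : Prop :=
  ∃ U : Multiset N.T, N.SFire X U Y ∧ α = chiM (N.srcM U) ∧ β = chiM (N.tgtM U)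

/-- Weak labelled semantics of P/T nets with boundaries. -/
def WLts (N : PTNet m n) (X : Multiset N.P) (α : Fin m → ℕ) (β : Fin n → ℕ)
    (Y : Multiset N.P) : Prop :=
  ∃ U : Multiset N.T, N.WFire X U Y ∧ α = chiM (N.srcM U) ∧ β = chiM (N.tgtM U)

/-- Synchronisation between P/T nets with a common boundary. -/
def Synch (M : PTNet l m) (N : PTNet m n) (U : Multiset M.T)
    (V : Multiset N.T) : Prop :=
  ¬(U = 0 ∧ V = 0) ∧ M.tgtM U = N.srcM V

/-- Minimal synchronisation. -/
def MinSynch (M : PTNet l m) (N : PTNet m n) (U : Multiset M.T)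
    (V : Multiset N.T) : Prop :=
  Synch M N U V ∧
    ∀ U' V', Synch M N U' V' → U' ≤ U → V' ≤ V → U' = U ∧ V' = V

end PTNet
namespace PTNet

variable {k l m n : ℕ}

/-- Footprints of transitions of the composite P/T net. -/
def FootprintPT (M : PTNet l m) (N : PTNet m n) : Type :=
  Multiset (M.P ⊕ N.P) × Multiset (M.P ⊕ N.P) × Multiset (Fin l) × Multiset (Fin n)

def footOf (M : PTNet l m) (N : PTNet m n) (U : Multiset M.T) (V : Multiset N.T) :
    FootprintPT M N :=
  ((M.preM U).map Sum.inl + (N.preM V).map Sum.inr,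
   (M.postM U).map Sum.inl + (N.postM V).map Sum.inr,
   M.srcM U, N.tgtM V)

/-- Combined marking on a disjoint union of places. -/
def mmk {A B : Type} (X : Multiset A) (Y : Multiset B) : Multiset (A ⊕ B) :=
  X.map Sum.inl + Y.map Sum.inr

/-- Composition of P/T nets with boundaries along a common boundary. -/
def comp (M : PTNet l m) (N : PTNet m n) : PTNet l n where
  P := M.P ⊕ N.P
  T := {fp : FootprintPT M N // ∃ U V, MinSynch M N U V ∧ footOf M N U V = fp}
  pre t := t.1.1
  post t := t.1.2.1
  src t := t.1.2.2.1
  tgt t := t.1.2.2.2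

end PTNet
namespace PTNet

variable {k l m n : ℕ}

/-- Tensor product of P/T nets with boundaries. -/
def tensor (M : PTNet k l) (N : PTNet m n) : PTNet (k + m) (l + n) where
  P := M.P ⊕ N.P
  T := M.T ⊕ N.T
  pre := Sum.elim (fun t => (M.pre t).map Sum.inl) (fun t => (N.pre t).map Sum.inr)
  post := Sum.elim (fun t => (M.post t).map Sum.inl) (fun t => (N.post t).map Sum.inr)
  src := Sum.elim (fun t => (M.src t).map (Fin.castAdd m))
    (fun t => (N.src t).map (Fin.natAdd k))
  tgt := Sum.elim (fun t => (M.tgt t).map (Fin.castAdd n))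
    (fun t => (N.tgt t).map (Fin.natAdd l))

end PTNet
/-- A bisimulation for a two-labelled transition system. -/
def IsBisimulation {S : Type*} {L : Type*} (tr : S → L → S → Prop)
    (R : S → S → Prop) : Prop :=
  ∀ p q, R p q →
    (∀ a p', tr p a p' → ∃ q', tr q a q' ∧ R p' q') ∧
    (∀ a q', tr q a q' → ∃ p', tr p a p' ∧ R p' q')

/-- Bisimilarity: two states are bisimilar when some bisimulation relates them. -/
def Bisimilar {S : Type*} {L : Type*} (tr : S → L → S → Prop) (p q : S) : Prop :=
  ∃ R, IsBisimulation tr R ∧ R p q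
/-- States of the labelled transition system of marked C/E nets with boundaries. -/
def CEState (m n : ℕ) : Type 1 := Σ N : CENet m n, Set N.P

/-- Transitions of marked C/E nets with boundaries. -/
def ceTrans (m n : ℕ) :
    CEState m n → Set (Fin m) × Set (Fin n) → CEState m n → Prop :=
  fun s a s' => ∃ Y : Set s.1.P, s.1.Lts s.2 a.1 a.2 Y ∧ s' = ⟨s.1, Y⟩
/-- States of the labelled transition system of marked P/T nets with boundaries. -/
def PTState (m n : ℕ) : Type 1 := Σ N : PTNet m n, Multiset N.P

/-- Strong transitions of marked P/T nets with boundaries. -/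
def ptSTrans (m n : ℕ) :
    PTState m n → (Fin m → ℕ) × (Fin n → ℕ) → PTState m n → Prop :=
  fun s a s' => ∃ Y : Multiset s.1.P, s.1.SLts s.2 a.1 a.2 Y ∧ s' = ⟨s.1, Y⟩

/-- Weak transitions of marked P/T nets with boundaries. -/
def ptWTrans (m n : ℕ) :
    PTState m n → (Fin m → ℕ) × (Fin n → ℕ) → PTState m n → Prop :=
  fun s a s' => ∃ Y : Multiset s.1.P, s.1.WLts s.2 a.1 a.2 Y ∧ s' = ⟨s.1, Y⟩

section Glue

/-- Generic congruence lemma: a big LTS whose transitions out of glued states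
are characterized by pairs of component moves. -/
theorem bisim_glue {BigS L L₁ L₂ MA MB MC : Type*}
    (btr : BigS → L → BigS → Prop)
    (tr₁ : MA → L₁ → MA → Prop) (tr₂ : MB → L₁ → MB → Prop)
    (trC : MC → L₂ → MC → Prop)
    (g₁ : MA → MC → BigS) (g₂ : MB → MC → BigS)
    (Compat : L₁ → L₂ → L → Prop)
    (char₁ : ∀ a c lab s', btr (g₁ a c) lab s' ↔
      ∃ a' c' l₁ l₂, s' = g₁ a' c' ∧ Compat l₁ l₂ lab ∧ tr₁ a l₁ a' ∧ trC c l₂ c')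
    (char₂ : ∀ b c lab s', btr (g₂ b c) lab s' ↔
      ∃ b' c' l₁ l₂, s' = g₂ b' c' ∧ Compat l₁ l₂ lab ∧ tr₂ b l₁ b' ∧ trC c l₂ c')
    (R' : MA → MB → Prop)
    (hR : ∀ a b, R' a b →
      (∀ l a', tr₁ a l a' → ∃ b', tr₂ b l b' ∧ R' a' b') ∧
      (∀ l b', tr₂ b l b' → ∃ a', tr₁ a l a' ∧ R' a' b'))
    (a₀ : MA) (b₀ : MB) (c₀ : MC) (h₀ : R' a₀ b₀) :
    Bisimilar btr (g₁ a₀ c₀) (g₂ b₀ c₀) := by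
  refine ⟨fun s t => ∃ a b c, s = g₁ a c ∧ t = g₂ b c ∧ R' a b, ?_, a₀, b₀, c₀, rfl, rfl, h₀⟩
  rintro s t ⟨a, b, c, rfl, rfl, hab⟩
  constructor
  · intro lab s' hs'
    obtain ⟨a', c', l₁, l₂, rfl, hcomp, h1, hC⟩ := (char₁ a c lab s').1 hs'
    obtain ⟨b', h2, hab'⟩ := (hR a b hab).1 l₁ a' h1
    exact ⟨g₂ b' c', (char₂ b c lab _).2 ⟨b', c', l₁, l₂, rfl, hcomp, h2, hC⟩,
      a', b', c', rfl, rfl, hab'⟩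
  · intro lab t' ht'
    obtain ⟨b', c', l₁, l₂, rfl, hcomp, h2, hC⟩ := (char₂ b c lab t').1 ht'
    obtain ⟨a', h1, hab'⟩ := (hR a b hab).2 l₁ b' h2
    exact ⟨g₁ a' c', (char₁ a c lab _).2 ⟨a', c', l₁, l₂, rfl, hcomp, h1, hC⟩,
      a', b', c', rfl, rfl, hab'⟩

end Glue

namespace PTNet

variable {k l m n : ℕ}

@[simp] theorem preM_zero (N : PTNet m n) : N.preM 0 = 0 := rfl
@[simp] theorem postM_zero (N : PTNet m n) : N.postM 0 = 0 := rfl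
@[simp] theorem srcM_zero (N : PTNet m n) : N.srcM 0 = 0 := rfl
@[simp] theorem tgtM_zero (N : PTNet m n) : N.tgtM 0 = 0 := rfl

@[simp] theorem preM_add (N : PTNet m n) (U V : Multiset N.T) :
    N.preM (U + V) = N.preM U + N.preM V := by simp [preM]
@[simp] theorem postM_add (N : PTNet m n) (U V : Multiset N.T) :
    N.postM (U + V) = N.postM U + N.postM V := by simp [postM]
@[simp] theorem srcM_add (N : PTNet m n) (U V : Multiset N.T) :
    N.srcM (U + V) = N.srcM U + N.srcM V := by simp [srcM]
@[simp] theorem tgtM_add (N : PTNet m n) (U V : Multiset N.T) :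
    N.tgtM (U + V) = N.tgtM U + N.tgtM V := by simp [tgtM]

@[simp] theorem preM_cons (N : PTNet m n) (t : N.T) (U : Multiset N.T) :
    N.preM (t ::ₘ U) = N.pre t + N.preM U := by simp [preM]
@[simp] theorem postM_cons (N : PTNet m n) (t : N.T) (U : Multiset N.T) :
    N.postM (t ::ₘ U) = N.post t + N.postM U := by simp [postM]
@[simp] theorem srcM_cons (N : PTNet m n) (t : N.T) (U : Multiset N.T) :
    N.srcM (t ::ₘ U) = N.src t + N.srcM U := by simp [srcM]
@[simp] theorem tgtM_cons (N : PTNet m n) (t : N.T) (U : Multiset N.T) :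
    N.tgtM (t ::ₘ U) = N.tgt t + N.tgtM U := by simp [tgtM]

theorem chiM_injective {k : ℕ} : Function.Injective (chiM (k := k)) := by
  intro M M' h
  ext a
  have := congrFun h a
  simpa [chiM] using this

/- mmk lemmas -/

@[simp] theorem mmk_zero {A B : Type} : (mmk (0 : Multiset A) (0 : Multiset B)) = 0 := rfl

theorem mmk_add {A B : Type} (a a' : Multiset A) (b b' : Multiset B) :
    mmk (a + a') (b + b') = mmk a b + mmk a' b' := by
  simp [mmk]; abel

@[simp] theorem count_mmk_inl {A B : Type} [DecidableEq A] [DecidableEq B]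
    (a : Multiset A) (b : Multiset B) (x : A) :
    (mmk a b).count (Sum.inl x) = a.count x := by
  classical
  simp [mmk, Multiset.count_map_eq_count' _ _ Sum.inl_injective]

@[simp] theorem count_mmk_inr {A B : Type} [DecidableEq A] [DecidableEq B]
    (a : Multiset A) (b : Multiset B) (x : B) :
    (mmk a b).count (Sum.inr x) = b.count x := by
  classical
  simp [mmk, Multiset.count_map_eq_count' _ _ Sum.inr_injective]

theorem mmk_le_mmk {A B : Type} {a c : Multiset A} {b d : Multiset B} :
    mmk a b ≤ mmk c d ↔ a ≤ c ∧ b ≤ d := by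
  classical
  constructor
  · intro h
    constructor
    · rw [Multiset.le_iff_count]; intro x
      simpa using Multiset.le_iff_count.1 h (Sum.inl x)
    · rw [Multiset.le_iff_count]; intro x
      simpa using Multiset.le_iff_count.1 h (Sum.inr x)
  · rintro ⟨h1, h2⟩
    rw [Multiset.le_iff_count]; intro x
    rcases x with x | x
    · simpa using Multiset.le_iff_count.1 h1 x
    · simpa using Multiset.le_iff_count.1 h2 x
end PTNet
namespace PTNet

variable {k l m n : ℕ}

theorem mmk_eq_mmk {A B : Type} {a c : Multiset A} {b d : Multiset B} :
    mmk a b = mmk c d ↔ a = c ∧ b = d := by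
  classical
  constructor
  · intro h
    constructor
    · ext x; have := congrArg (Multiset.count (Sum.inl x)) h; simpa using this
    · ext x; have := congrArg (Multiset.count (Sum.inr x)) h; simpa using this
  · rintro ⟨rfl, rfl⟩; rfl

theorem exists_mmk {A B : Type} (s : Multiset (A ⊕ B)) :
    ∃ a b, s = mmk a b := by
  induction s using Multiset.induction with
  | empty => exact ⟨0, 0, rfl⟩
  | cons x s ih =>
    obtain ⟨a, b, rfl⟩ := ih
    rcases x with x | x
    · exact ⟨x ::ₘ a, b, by simp [mmk, add_assoc]⟩
    · refine ⟨a, x ::ₘ b, ?_⟩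
      simp only [mmk, Multiset.map_cons]
      rw [← Multiset.singleton_add, ← Multiset.singleton_add]
      abel

/-- Strong firing, subtraction-free. -/
theorem sfire_iff (N : PTNet m n) (X : Multiset N.P) (U : Multiset N.T)
    (Y : Multiset N.P) :
    N.SFire X U Y ↔ ∃ K, X = N.preM U + K ∧ Y = N.postM U + K := by
  letI := Classical.decEq N.P
  constructor
  · rintro ⟨h1, h2, h3⟩
    refine ⟨X - N.preM U, (add_tsub_cancel_of_le h1).symm, ?_⟩
    rw [h3]
    exact (add_tsub_cancel_of_le h2).symm
  · rintro ⟨K, rfl, rfl⟩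
    exact ⟨Multiset.le_add_right _ _, Multiset.le_add_right _ _,
      by rw [add_tsub_cancel_left, add_tsub_cancel_left]⟩

theorem castAdd_inj {k m : ℕ} : Function.Injective (Fin.castAdd m : Fin k → Fin (k + m)) := by
  intro a b h
  exact Fin.ext (by simpa using congrArg Fin.val h)

theorem natAdd_inj {k m : ℕ} : Function.Injective (Fin.natAdd k : Fin m → Fin (k + m)) := by
  intro a b h
  have := congrArg Fin.val h
  simp at this
  exact Fin.ext this

theorem count_castAdd_map_natAdd {k m : ℕ} (i : Fin k) (T : Multiset (Fin m)) :
    (T.map (Fin.natAdd k)).count (Fin.castAdd m i) = 0 := by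
  rw [Multiset.count_eq_zero]
  intro hmem
  obtain ⟨j, -, hj⟩ := Multiset.mem_map.1 hmem
  simp [Fin.ext_iff] at hj
  have := i.isLt
  omega

theorem count_natAdd_map_castAdd {k m : ℕ} (i : Fin m) (S : Multiset (Fin k)) :
    (S.map (Fin.castAdd m)).count (Fin.natAdd k i) = 0 := by
  rw [Multiset.count_eq_zero]
  intro hmem
  obtain ⟨j, -, hj⟩ := Multiset.mem_map.1 hmem
  simp [Fin.ext_iff] at hj
  have := i.isLt
  omega

/-- The glued label function on `Fin (k+m)`. -/
def hcomb {k m : ℕ} (f : Fin k → ℕ) (g : Fin m → ℕ) : Fin (k + m) → ℕ :=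
  Fin.addCases f g

theorem chiM_castAdd_natAdd {k m : ℕ} (S : Multiset (Fin k)) (T : Multiset (Fin m)) :
    chiM (S.map (Fin.castAdd m) + T.map (Fin.natAdd k)) = hcomb (chiM S) (chiM T) := by
  classical
  funext i
  refine Fin.addCases (fun i => ?_) (fun i => ?_) i
  · simp [chiM, hcomb, Multiset.count_map_eq_count' _ _ castAdd_inj,
      count_castAdd_map_natAdd]
  · simp [chiM, hcomb, Multiset.count_map_eq_count' _ _ natAdd_inj,
      count_natAdd_map_castAdd]

end PTNet
namespace PTNet

variable {k l m n : ℕ}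

section Comp

variable (M : PTNet l m) (N : PTNet m n)

noncomputable def selU (t : (M.comp N).T) : Multiset M.T := t.2.choose
noncomputable def selV (t : (M.comp N).T) : Multiset N.T := t.2.choose_spec.choose

theorem sel_spec (t : (M.comp N).T) :
    MinSynch M N (selU M N t) (selV M N t) ∧
      footOf M N (selU M N t) (selV M N t) = t.1 :=
  t.2.choose_spec.choose_spec

noncomputable def bigU (W : Multiset (M.comp N).T) : Multiset M.T :=
  (W.map (selU M N)).sum

noncomputable def bigV (W : Multiset (M.comp N).T) : Multiset N.T :=
  (W.map (selV M N)).sum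

@[simp] theorem bigU_zero : bigU M N 0 = 0 := rfl
@[simp] theorem bigV_zero : bigV M N 0 = 0 := rfl
@[simp] theorem bigU_cons (t : (M.comp N).T) (W : Multiset (M.comp N).T) :
    bigU M N (t ::ₘ W) = selU M N t + bigU M N W := by simp [bigU]
@[simp] theorem bigV_cons (t : (M.comp N).T) (W : Multiset (M.comp N).T) :
    bigV M N (t ::ₘ W) = selV M N t + bigV M N W := by simp [bigV]

theorem comp_preM (W : Multiset (M.comp N).T) :
    (M.comp N).preM W = mmk (M.preM (bigU M N W)) (N.preM (bigV M N W)) := by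
  induction W using Multiset.induction with
  | empty => simp; rfl
  | cons t W ih =>
    have hfoot := (sel_spec M N t).2
    have hpre : (M.comp N).pre t = mmk (M.preM (selU M N t)) (N.preM (selV M N t)) := by
      show t.1.1 = _
      rw [← hfoot]; rfl
    simp only [preM_cons, bigU_cons, bigV_cons, preM_add, ih, hpre, mmk_add]; rfl

theorem comp_postM (W : Multiset (M.comp N).T) :
    (M.comp N).postM W = mmk (M.postM (bigU M N W)) (N.postM (bigV M N W)) := by
  induction W using Multiset.induction with
  | empty => simp; rfl
  | cons t W ih =>
    have hfoot := (sel_spec M N t).2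
    have hpost : (M.comp N).post t = mmk (M.postM (selU M N t)) (N.postM (selV M N t)) := by
      show t.1.2.1 = _
      rw [← hfoot]; rfl
    simp only [postM_cons, bigU_cons, bigV_cons, postM_add, ih, hpost, mmk_add]; rfl

theorem comp_srcM (W : Multiset (M.comp N).T) :
    (M.comp N).srcM W = M.srcM (bigU M N W) := by
  induction W using Multiset.induction with
  | empty => simp
  | cons t W ih =>
    have hfoot := (sel_spec M N t).2
    have hsrc : (M.comp N).src t = M.srcM (selU M N t) := by
      show t.1.2.2.1 = _
      rw [← hfoot]; rfl
    simp only [srcM_cons, bigU_cons, srcM_add, ih, hsrc]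

theorem comp_tgtM (W : Multiset (M.comp N).T) :
    (M.comp N).tgtM W = N.tgtM (bigV M N W) := by
  induction W using Multiset.induction with
  | empty => simp
  | cons t W ih =>
    have hfoot := (sel_spec M N t).2
    have htgt : (M.comp N).tgt t = N.tgtM (selV M N t) := by
      show t.1.2.2.2 = _
      rw [← hfoot]; rfl
    simp only [tgtM_cons, bigV_cons, tgtM_add, ih, htgt]

theorem bigU_synch (W : Multiset (M.comp N).T) :
    M.tgtM (bigU M N W) = N.srcM (bigV M N W) := by
  induction W using Multiset.induction with
  | empty => simp
  | cons t W ih =>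
    simp only [bigU_cons, bigV_cons, tgtM_add, srcM_add, ih, (sel_spec M N t).1.1.2]

end Comp

end PTNet
namespace PTNet

variable {k l m n : ℕ}

section Decomp

variable (M : PTNet l m) (N : PTNet m n)

theorem exists_minSynch_le {U : Multiset M.T} {V : Multiset N.T}
    (h : Synch M N U V) :
    ∃ U₀ V₀, MinSynch M N U₀ V₀ ∧ U₀ ≤ U ∧ V₀ ≤ V := by
  classical
  have hex : ∃ nn, ∃ U' V', (Synch M N U' V' ∧ U' ≤ U ∧ V' ≤ V) ∧
      Multiset.card U' + Multiset.card V' = nn :=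
    ⟨_, U, V, ⟨h, le_rfl, le_rfl⟩, rfl⟩
  obtain ⟨U₀, V₀, ⟨hs₀, hU₀, hV₀⟩, hcard₀⟩ := Nat.find_spec hex
  refine ⟨U₀, V₀, ⟨hs₀, ?_⟩, hU₀, hV₀⟩
  intro U' V' hs' hU' hV'
  have hle : Nat.find hex ≤ Multiset.card U' + Multiset.card V' :=
    Nat.find_min' hex ⟨U', V', ⟨hs', hU'.trans hU₀, hV'.trans hV₀⟩, rfl⟩
  have h1 := Multiset.card_le_card hU'
  have h2 := Multiset.card_le_card hV'
  rw [← hcard₀] at hle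
  exact ⟨Multiset.eq_of_le_of_card_le hU' (by omega),
    Multiset.eq_of_le_of_card_le hV' (by omega)⟩

theorem synch_decomp :
    ∀ (c : ℕ) (U : Multiset M.T) (V : Multiset N.T),
      Multiset.card U + Multiset.card V = c → Synch M N U V →
      ∃ W : Multiset (M.comp N).T,
        (M.comp N).preM W = mmk (M.preM U) (N.preM V) ∧
        (M.comp N).postM W = mmk (M.postM U) (N.postM V) ∧
        (M.comp N).srcM W = M.srcM U ∧
        (M.comp N).tgtM W = N.tgtM V := by
  intro c
  induction c using Nat.strong_induction_on with
  | _ c ih =>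
    intro U V hc h
    classical
    obtain ⟨U₀, V₀, hmin, hU₀, hV₀⟩ := exists_minSynch_le M N h
    set t₀ : (M.comp N).T := ⟨footOf M N U₀ V₀, U₀, V₀, hmin, rfl⟩ with ht₀
    have hpre0 : (M.comp N).pre t₀ = mmk (M.preM U₀) (N.preM V₀) := rfl
    have hpost0 : (M.comp N).post t₀ = mmk (M.postM U₀) (N.postM V₀) := rfl
    have hsrc0 : (M.comp N).src t₀ = M.srcM U₀ := rfl
    have htgt0 : (M.comp N).tgt t₀ = N.tgtM V₀ := rfl
    have hUeq : U₀ + (U - U₀) = U := add_tsub_cancel_of_le hU₀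
    have hVeq : V₀ + (V - V₀) = V := add_tsub_cancel_of_le hV₀
    have hsynch1 : M.tgtM (U - U₀) = N.srcM (V - V₀) := by
      have h1 : M.tgtM U₀ + M.tgtM (U - U₀) = N.srcM V₀ + N.srcM (V - V₀) := by
        rw [← tgtM_add, ← srcM_add, hUeq, hVeq]; exact h.2
      rw [hmin.1.2] at h1
      exact add_left_cancel h1
    by_cases hzero : U - U₀ = 0 ∧ V - V₀ = 0
    · have hU : U = U₀ := by rw [← hUeq, hzero.1, add_zero]
      have hV : V = V₀ := by rw [← hVeq, hzero.2, add_zero]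
      refine ⟨{t₀}, ?_, ?_, ?_, ?_⟩ <;>
        simp [← Multiset.cons_zero, hU, hV, hpre0, hpost0, hsrc0, htgt0] <;> exact add_zero _
    · have hpos : 0 < Multiset.card U₀ + Multiset.card V₀ := by
        by_contra hc'
        push_neg at hc'
        exact hmin.1.1 ⟨by rw [← Multiset.card_eq_zero]; omega,
          by rw [← Multiset.card_eq_zero]; omega⟩
      have hcard : Multiset.card (U - U₀) + Multiset.card (V - V₀) < c := by
        have h1 : Multiset.card U₀ + Multiset.card (U - U₀) = Multiset.card U := by
          rw [← Multiset.card_add, hUeq]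
        have h2 : Multiset.card V₀ + Multiset.card (V - V₀) = Multiset.card V := by
          rw [← Multiset.card_add, hVeq]
        omega
      obtain ⟨W₁, hp, hq, hr, hs⟩ := ih _ hcard (U - U₀) (V - V₀) rfl
        ⟨hzero, hsynch1⟩
      refine ⟨t₀ ::ₘ W₁, ?_, ?_, ?_, ?_⟩
      · erw [preM_cons, hpre0, hp, ← mmk_add, ← preM_add, ← preM_add, hUeq, hVeq]
      · erw [postM_cons, hpost0, hq, ← mmk_add, ← postM_add, ← postM_add, hUeq, hVeq]
      · rw [srcM_cons, hsrc0, hr, ← srcM_add, hUeq]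
      · rw [tgtM_cons, htgt0, hs, ← tgtM_add, hVeq]

end Decomp

end PTNet
namespace PTNet

variable {k l m n : ℕ}

theorem comp_slts_iff (M : PTNet l m) (R : PTNet m n) (X : Multiset M.P)
    (Z : Multiset R.P) (α : Fin l → ℕ) (β : Fin n → ℕ)
    (Y : Multiset (M.comp R).P) :
    (M.comp R).SLts (mmk X Z) α β Y ↔
      ∃ X' Z' γ, Y = mmk X' Z' ∧ M.SLts X α γ X' ∧ R.SLts Z γ β Z' := by
  constructor
  · rintro ⟨W, hfire, hα, hβ⟩
    erw [sfire_iff] at hfire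
    obtain ⟨K, hX, hY⟩ := hfire
    obtain ⟨K₁, K₂, rfl⟩ := exists_mmk K
    erw [comp_preM, ← mmk_add, mmk_eq_mmk] at hX
    erw [comp_postM, ← mmk_add] at hY
    refine ⟨M.postM (bigU M R W) + K₁, R.postM (bigV M R W) + K₂,
      chiM (M.tgtM (bigU M R W)), hY, ?_, ?_⟩
    · exact ⟨bigU M R W, (sfire_iff _ _ _ _).2 ⟨K₁, hX.1, rfl⟩,
        by rw [hα, comp_srcM], rfl⟩
    · exact ⟨bigV M R W, (sfire_iff _ _ _ _).2 ⟨K₂, hX.2, rfl⟩,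
        by rw [bigU_synch], by rw [hβ, comp_tgtM]⟩
  · rintro ⟨X', Z', γ, rfl, ⟨U, hfU, hαU, hγU⟩, ⟨V, hfV, hγV, hβV⟩⟩
    have hUV : M.tgtM U = R.srcM V := chiM_injective (by rw [← hγU, ← hγV])
    rw [sfire_iff] at hfU hfV
    obtain ⟨K₁, hX1, hX1'⟩ := hfU
    obtain ⟨K₂, hX2, hX2'⟩ := hfV
    by_cases hzero : U = 0 ∧ V = 0
    · rw [hzero.1] at hX1 hX1'
      rw [hzero.2] at hX2 hX2'
      simp at hX1 hX1' hX2 hX2'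
      refine ⟨0, (sfire_iff _ _ _ _).2 ⟨mmk X Z, (zero_add _).symm, ?_⟩, ?_, ?_⟩
      · simp [hX1, hX1', hX2, hX2']; exact (zero_add _).symm
      · rw [hαU, hzero.1]; rfl
      · rw [hβV, hzero.2]; rfl
    · obtain ⟨W, hp, hq, hr, hs⟩ :=
        synch_decomp M R (Multiset.card U + Multiset.card V) U V rfl ⟨hzero, hUV⟩
      refine ⟨W, (sfire_iff _ _ _ _).2 ⟨mmk K₁ K₂, ?_, ?_⟩, ?_, ?_⟩
      · erw [hp, ← mmk_add, ← hX1, ← hX2]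
      · erw [hq, ← mmk_add, ← hX1', ← hX2']
      · rw [hαU, comp_srcM, ← hr, comp_srcM]
      · rw [hβV, comp_tgtM, ← hs, comp_tgtM]

theorem comp_wlts_iff (M : PTNet l m) (R : PTNet m n) (X : Multiset M.P)
    (Z : Multiset R.P) (α : Fin l → ℕ) (β : Fin n → ℕ)
    (Y : Multiset (M.comp R).P) :
    (M.comp R).WLts (mmk X Z) α β Y ↔
      ∃ X' Z' γ, Y = mmk X' Z' ∧ M.WLts X α γ X' ∧ R.WLts Z γ β Z' := by
  constructor
  · rintro ⟨W, hfire, hα, hβ⟩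
    obtain ⟨Y₁, Y₂, rfl⟩ := exists_mmk Y
    unfold WFire at hfire
    erw [comp_preM, comp_postM, ← mmk_add, ← mmk_add, mmk_eq_mmk] at hfire
    exact ⟨Y₁, Y₂, chiM (M.tgtM (bigU M R W)), rfl,
      ⟨bigU M R W, hfire.1, by rw [hα, comp_srcM], rfl⟩,
      ⟨bigV M R W, hfire.2, by rw [bigU_synch], by rw [hβ, comp_tgtM]⟩⟩
  · rintro ⟨X', Z', γ, rfl, ⟨U, hfU, hαU, hγU⟩, ⟨V, hfV, hγV, hβV⟩⟩
    have hUV : M.tgtM U = R.srcM V := chiM_injective (by rw [← hγU, ← hγV])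
    unfold WFire at hfU hfV
    by_cases hzero : U = 0 ∧ V = 0
    · rw [hzero.1] at hfU hαU
      rw [hzero.2] at hfV hβV
      simp at hfU hfV
      refine ⟨0, ?_, ?_, ?_⟩
      · unfold WFire; simp [hfU, hfV]
      · rw [hαU]; rfl
      · rw [hβV]; rfl
    · obtain ⟨W, hp, hq, hr, hs⟩ :=
        synch_decomp M R (Multiset.card U + Multiset.card V) U V rfl ⟨hzero, hUV⟩
      refine ⟨W, ?_, ?_, ?_⟩
      · unfold WFire
        erw [hp, hq, ← mmk_add, ← mmk_add, mmk_eq_mmk]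
        exact ⟨hfU, hfV⟩
      · rw [hαU, comp_srcM, ← hr, comp_srcM]
      · rw [hβV, comp_tgtM, ← hs, comp_tgtM]

end PTNet
namespace PTNet

variable {k l m n : ℕ}

section Tensor

variable (M : PTNet k l) (R : PTNet m n)

@[simp] theorem tensor_pre_inl (t : M.T) :
    (M.tensor R).pre (Sum.inl t) = (M.pre t).map Sum.inl := rfl
@[simp] theorem tensor_pre_inr (t : R.T) :
    (M.tensor R).pre (Sum.inr t) = (R.pre t).map Sum.inr := rfl
@[simp] theorem tensor_post_inl (t : M.T) :
    (M.tensor R).post (Sum.inl t) = (M.post t).map Sum.inl := rfl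
@[simp] theorem tensor_post_inr (t : R.T) :
    (M.tensor R).post (Sum.inr t) = (R.post t).map Sum.inr := rfl
@[simp] theorem tensor_src_inl (t : M.T) :
    (M.tensor R).src (Sum.inl t) = (M.src t).map (Fin.castAdd m) := rfl
@[simp] theorem tensor_src_inr (t : R.T) :
    (M.tensor R).src (Sum.inr t) = (R.src t).map (Fin.natAdd k) := rfl
@[simp] theorem tensor_tgt_inl (t : M.T) :
    (M.tensor R).tgt (Sum.inl t) = (M.tgt t).map (Fin.castAdd n) := rfl
@[simp] theorem tensor_tgt_inr (t : R.T) :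
    (M.tensor R).tgt (Sum.inr t) = (R.tgt t).map (Fin.natAdd l) := rfl

theorem tensor_preM (U₁ : Multiset M.T) (U₂ : Multiset R.T) :
    (M.tensor R).preM (mmk U₁ U₂) = mmk (M.preM U₁) (R.preM U₂) := by
  have h1 : (M.tensor R).preM (U₁.map Sum.inl) = (M.preM U₁).map Sum.inl := by
    induction U₁ using Multiset.induction with
    | empty => rfl
    | cons t U ih => erw [Multiset.map_cons, preM_cons, ih, preM_cons, Multiset.map_add]; rfl
  have h2 : (M.tensor R).preM (U₂.map Sum.inr) = (R.preM U₂).map Sum.inr := by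
    induction U₂ using Multiset.induction with
    | empty => rfl
    | cons t U ih => erw [Multiset.map_cons, preM_cons, ih, preM_cons, Multiset.map_add]; rfl
  erw [mmk, preM_add, h1, h2]; rfl

theorem tensor_postM (U₁ : Multiset M.T) (U₂ : Multiset R.T) :
    (M.tensor R).postM (mmk U₁ U₂) = mmk (M.postM U₁) (R.postM U₂) := by
  have h1 : (M.tensor R).postM (U₁.map Sum.inl) = (M.postM U₁).map Sum.inl := by
    induction U₁ using Multiset.induction with
    | empty => rfl
    | cons t U ih => erw [Multiset.map_cons, postM_cons, ih, postM_cons, Multiset.map_add]; rfl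
  have h2 : (M.tensor R).postM (U₂.map Sum.inr) = (R.postM U₂).map Sum.inr := by
    induction U₂ using Multiset.induction with
    | empty => rfl
    | cons t U ih => erw [Multiset.map_cons, postM_cons, ih, postM_cons, Multiset.map_add]; rfl
  erw [mmk, postM_add, h1, h2]; rfl

theorem tensor_srcM (U₁ : Multiset M.T) (U₂ : Multiset R.T) :
    (M.tensor R).srcM (mmk U₁ U₂)
      = (M.srcM U₁).map (Fin.castAdd m) + (R.srcM U₂).map (Fin.natAdd k) := by
  have h1 : (M.tensor R).srcM (U₁.map Sum.inl) = (M.srcM U₁).map (Fin.castAdd m) := by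
    induction U₁ using Multiset.induction with
    | empty => rfl
    | cons t U ih => erw [Multiset.map_cons, srcM_cons, ih, srcM_cons, Multiset.map_add]; rfl
  have h2 : (M.tensor R).srcM (U₂.map Sum.inr) = (R.srcM U₂).map (Fin.natAdd k) := by
    induction U₂ using Multiset.induction with
    | empty => rfl
    | cons t U ih => erw [Multiset.map_cons, srcM_cons, ih, srcM_cons, Multiset.map_add]; rfl
  erw [mmk, srcM_add, h1, h2]

theorem tensor_tgtM (U₁ : Multiset M.T) (U₂ : Multiset R.T) :
    (M.tensor R).tgtM (mmk U₁ U₂)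
      = (M.tgtM U₁).map (Fin.castAdd n) + (R.tgtM U₂).map (Fin.natAdd l) := by
  have h1 : (M.tensor R).tgtM (U₁.map Sum.inl) = (M.tgtM U₁).map (Fin.castAdd n) := by
    induction U₁ using Multiset.induction with
    | empty => rfl
    | cons t U ih => erw [Multiset.map_cons, tgtM_cons, ih, tgtM_cons, Multiset.map_add]; rfl
  have h2 : (M.tensor R).tgtM (U₂.map Sum.inr) = (R.tgtM U₂).map (Fin.natAdd l) := by
    induction U₂ using Multiset.induction with
    | empty => rfl
    | cons t U ih => erw [Multiset.map_cons, tgtM_cons, ih, tgtM_cons, Multiset.map_add]; rfl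
  erw [mmk, tgtM_add, h1, h2]

theorem tensor_slts_iff (X : Multiset M.P) (Z : Multiset R.P)
    (α : Fin (k + m) → ℕ) (β : Fin (l + n) → ℕ) (Y : Multiset (M.tensor R).P) :
    (M.tensor R).SLts (mmk X Z) α β Y ↔
      ∃ X' Z' α₁ β₁ α₂ β₂, Y = mmk X' Z' ∧ α = hcomb α₁ α₂ ∧ β = hcomb β₁ β₂ ∧
        M.SLts X α₁ β₁ X' ∧ R.SLts Z α₂ β₂ Z' := by
  constructor
  · rintro ⟨U, hfire, hα, hβ⟩
    obtain ⟨U₁, U₂, rfl⟩ := exists_mmk U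
    erw [sfire_iff] at hfire
    obtain ⟨K, hX, hY⟩ := hfire
    obtain ⟨K₁, K₂, rfl⟩ := exists_mmk K
    erw [tensor_preM, ← mmk_add, mmk_eq_mmk] at hX
    erw [tensor_postM, ← mmk_add] at hY
    refine ⟨M.postM U₁ + K₁, R.postM U₂ + K₂, chiM (M.srcM U₁), chiM (M.tgtM U₁),
      chiM (R.srcM U₂), chiM (R.tgtM U₂), hY, ?_, ?_, ?_, ?_⟩
    · rw [hα, tensor_srcM, chiM_castAdd_natAdd]
    · rw [hβ, tensor_tgtM, chiM_castAdd_natAdd]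
    · exact ⟨U₁, (sfire_iff _ _ _ _).2 ⟨K₁, hX.1, rfl⟩, rfl, rfl⟩
    · exact ⟨U₂, (sfire_iff _ _ _ _).2 ⟨K₂, hX.2, rfl⟩, rfl, rfl⟩
  · rintro ⟨X', Z', α₁, β₁, α₂, β₂, rfl, hα, hβ, ⟨U₁, hf1, hα1, hβ1⟩, ⟨U₂, hf2, hα2, hβ2⟩⟩
    rw [sfire_iff] at hf1 hf2
    obtain ⟨K₁, hX1, hX1'⟩ := hf1
    obtain ⟨K₂, hX2, hX2'⟩ := hf2
    refine ⟨mmk U₁ U₂, (sfire_iff _ _ _ _).2 ⟨mmk K₁ K₂, ?_, ?_⟩, ?_, ?_⟩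
    · erw [tensor_preM, ← mmk_add, ← hX1, ← hX2]
    · erw [tensor_postM, ← mmk_add, ← hX1', ← hX2']
    · rw [hα, tensor_srcM, chiM_castAdd_natAdd, hα1, hα2]
    · rw [hβ, tensor_tgtM, chiM_castAdd_natAdd, hβ1, hβ2]

theorem tensor_wlts_iff (X : Multiset M.P) (Z : Multiset R.P)
    (α : Fin (k + m) → ℕ) (β : Fin (l + n) → ℕ) (Y : Multiset (M.tensor R).P) :
    (M.tensor R).WLts (mmk X Z) α β Y ↔
      ∃ X' Z' α₁ β₁ α₂ β₂, Y = mmk X' Z' ∧ α = hcomb α₁ α₂ ∧ β = hcomb β₁ β₂ ∧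
        M.WLts X α₁ β₁ X' ∧ R.WLts Z α₂ β₂ Z' := by
  constructor
  · rintro ⟨U, hfire, hα, hβ⟩
    obtain ⟨U₁, U₂, rfl⟩ := exists_mmk U
    obtain ⟨Y₁, Y₂, rfl⟩ := exists_mmk Y
    unfold WFire at hfire
    erw [tensor_preM, tensor_postM, ← mmk_add, ← mmk_add, mmk_eq_mmk] at hfire
    refine ⟨Y₁, Y₂, chiM (M.srcM U₁), chiM (M.tgtM U₁),
      chiM (R.srcM U₂), chiM (R.tgtM U₂), rfl, ?_, ?_, ?_, ?_⟩
    · rw [hα, tensor_srcM, chiM_castAdd_natAdd]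
    · rw [hβ, tensor_tgtM, chiM_castAdd_natAdd]
    · exact ⟨U₁, hfire.1, rfl, rfl⟩
    · exact ⟨U₂, hfire.2, rfl, rfl⟩
  · rintro ⟨X', Z', α₁, β₁, α₂, β₂, rfl, hα, hβ, ⟨U₁, hf1, hα1, hβ1⟩, ⟨U₂, hf2, hα2, hβ2⟩⟩
    unfold WFire at hf1 hf2
    refine ⟨mmk U₁ U₂, ?_, ?_, ?_⟩
    · unfold WFire
      erw [tensor_preM, tensor_postM, ← mmk_add, ← mmk_add, mmk_eq_mmk]
      exact ⟨hf1, hf2⟩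
    · rw [hα, tensor_srcM, chiM_castAdd_natAdd, hα1, hα2]
    · rw [hβ, tensor_tgtM, chiM_castAdd_natAdd, hβ1, hβ2]

end Tensor

end PTNet
namespace PTNet

theorem comp_strans_char {kk ll mm : ℕ} (M : PTNet kk ll) (R : PTNet ll mm)
    (a : Multiset M.P) (c : Multiset R.P) (lab : (Fin kk → ℕ) × (Fin mm → ℕ))
    (s' : PTState kk mm) :
    ptSTrans kk mm ⟨M.comp R, mmk a c⟩ lab s' ↔
      ∃ (a' : _) (c' : _) (l₁ : (Fin kk → ℕ) × (Fin ll → ℕ)) (l₂ : (Fin ll → ℕ) × (Fin mm → ℕ)),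
        s' = ⟨M.comp R, mmk a' c'⟩ ∧ (l₁.2 = l₂.1 ∧ lab = (l₁.1, l₂.2)) ∧
        M.SLts a l₁.1 l₁.2 a' ∧ R.SLts c l₂.1 l₂.2 c' := by
  constructor
  · rintro ⟨Y, hY, rfl⟩
    obtain ⟨a', c', γ, rfl, h1, h2⟩ := (comp_slts_iff M R a c lab.1 lab.2 Y).1 hY
    exact ⟨a', c', (lab.1, γ), (γ, lab.2), rfl, ⟨rfl, rfl⟩, h1, h2⟩
  · rintro ⟨a', c', l₁, l₂, rfl, ⟨hmid, hlab⟩, h1, h2⟩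
    refine ⟨mmk a' c', ?_, rfl⟩
    rw [hlab]
    exact (comp_slts_iff M R a c _ _ _).2 ⟨a', c', l₂.1, rfl, hmid ▸ h1, h2⟩

theorem comp_strans_char' {kk ll mm : ℕ} (L : PTNet kk ll) (M : PTNet ll mm)
    (a : Multiset M.P) (c : Multiset L.P) (lab : (Fin kk → ℕ) × (Fin mm → ℕ))
    (s' : PTState kk mm) :
    ptSTrans kk mm ⟨L.comp M, mmk c a⟩ lab s' ↔
      ∃ (a' : _) (c' : _) (l₁ : (Fin ll → ℕ) × (Fin mm → ℕ)) (l₂ : (Fin kk → ℕ) × (Fin ll → ℕ)),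
        s' = ⟨L.comp M, mmk c' a'⟩ ∧ (l₂.2 = l₁.1 ∧ lab = (l₂.1, l₁.2)) ∧
        M.SLts a l₁.1 l₁.2 a' ∧ L.SLts c l₂.1 l₂.2 c' := by
  rw [comp_strans_char L M c a lab s']
  constructor
  · rintro ⟨c', a', l₂, l₁, h, ⟨hmid, hlab⟩, h2, h1⟩
    exact ⟨a', c', l₁, l₂, h, ⟨hmid, hlab⟩, h1, h2⟩
  · rintro ⟨a', c', l₁, l₂, h, ⟨hmid, hlab⟩, h1, h2⟩
    exact ⟨c', a', l₂, l₁, h, ⟨hmid, hlab⟩, h2, h1⟩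

theorem tensor_strans_char {kk ll mm nn : ℕ} (M : PTNet kk ll) (R : PTNet mm nn)
    (a : Multiset M.P) (c : Multiset R.P)
    (lab : (Fin (kk + mm) → ℕ) × (Fin (ll + nn) → ℕ)) (s' : PTState (kk + mm) (ll + nn)) :
    ptSTrans (kk + mm) (ll + nn) ⟨M.tensor R, mmk a c⟩ lab s' ↔
      ∃ (a' : _) (c' : _) (l₁ : (Fin kk → ℕ) × (Fin ll → ℕ)) (l₂ : (Fin mm → ℕ) × (Fin nn → ℕ)),
        s' = ⟨M.tensor R, mmk a' c'⟩ ∧ (lab = (hcomb l₁.1 l₂.1, hcomb l₁.2 l₂.2)) ∧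
        M.SLts a l₁.1 l₁.2 a' ∧ R.SLts c l₂.1 l₂.2 c' := by
  constructor
  · rintro ⟨Y, hY, rfl⟩
    obtain ⟨a', c', α₁, β₁, α₂, β₂, rfl, hα, hβ, h1, h2⟩ :=
      (tensor_slts_iff M R a c lab.1 lab.2 Y).1 hY
    exact ⟨a', c', (α₁, β₁), (α₂, β₂), rfl, by rw [← hα, ← hβ], h1, h2⟩
  · rintro ⟨a', c', l₁, l₂, rfl, hlab, h1, h2⟩
    refine ⟨mmk a' c', ?_, rfl⟩
    rw [hlab]
    exact (tensor_slts_iff M R a c _ _ _).2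
      ⟨a', c', l₁.1, l₁.2, l₂.1, l₂.2, rfl, rfl, rfl, h1, h2⟩

theorem tensor_strans_char' {kk ll mm nn : ℕ} (R : PTNet kk ll) (M : PTNet mm nn)
    (a : Multiset M.P) (c : Multiset R.P)
    (lab : (Fin (kk + mm) → ℕ) × (Fin (ll + nn) → ℕ)) (s' : PTState (kk + mm) (ll + nn)) :
    ptSTrans (kk + mm) (ll + nn) ⟨R.tensor M, mmk c a⟩ lab s' ↔
      ∃ (a' : _) (c' : _) (l₁ : (Fin mm → ℕ) × (Fin nn → ℕ)) (l₂ : (Fin kk → ℕ) × (Fin ll → ℕ)),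
        s' = ⟨R.tensor M, mmk c' a'⟩ ∧ (lab = (hcomb l₂.1 l₁.1, hcomb l₂.2 l₁.2)) ∧
        M.SLts a l₁.1 l₁.2 a' ∧ R.SLts c l₂.1 l₂.2 c' := by
  rw [tensor_strans_char R M c a lab s']
  constructor
  · rintro ⟨c', a', l₂, l₁, h, hlab, h2, h1⟩
    exact ⟨a', c', l₁, l₂, h, hlab, h1, h2⟩
  · rintro ⟨a', c', l₁, l₂, h, hlab, h1, h2⟩
    exact ⟨c', a', l₂, l₁, h, hlab, h2, h1⟩

theorem comp_wtrans_char {kk ll mm : ℕ} (M : PTNet kk ll) (R : PTNet ll mm)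
    (a : Multiset M.P) (c : Multiset R.P) (lab : (Fin kk → ℕ) × (Fin mm → ℕ))
    (s' : PTState kk mm) :
    ptWTrans kk mm ⟨M.comp R, mmk a c⟩ lab s' ↔
      ∃ (a' : _) (c' : _) (l₁ : (Fin kk → ℕ) × (Fin ll → ℕ)) (l₂ : (Fin ll → ℕ) × (Fin mm → ℕ)),
        s' = ⟨M.comp R, mmk a' c'⟩ ∧ (l₁.2 = l₂.1 ∧ lab = (l₁.1, l₂.2)) ∧
        M.WLts a l₁.1 l₁.2 a' ∧ R.WLts c l₂.1 l₂.2 c' := by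
  constructor
  · rintro ⟨Y, hY, rfl⟩
    obtain ⟨a', c', γ, rfl, h1, h2⟩ := (comp_wlts_iff M R a c lab.1 lab.2 Y).1 hY
    exact ⟨a', c', (lab.1, γ), (γ, lab.2), rfl, ⟨rfl, rfl⟩, h1, h2⟩
  · rintro ⟨a', c', l₁, l₂, rfl, ⟨hmid, hlab⟩, h1, h2⟩
    refine ⟨mmk a' c', ?_, rfl⟩
    rw [hlab]
    exact (comp_wlts_iff M R a c _ _ _).2 ⟨a', c', l₂.1, rfl, hmid ▸ h1, h2⟩

theorem comp_wtrans_char' {kk ll mm : ℕ} (L : PTNet kk ll) (M : PTNet ll mm)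
    (a : Multiset M.P) (c : Multiset L.P) (lab : (Fin kk → ℕ) × (Fin mm → ℕ))
    (s' : PTState kk mm) :
    ptWTrans kk mm ⟨L.comp M, mmk c a⟩ lab s' ↔
      ∃ (a' : _) (c' : _) (l₁ : (Fin ll → ℕ) × (Fin mm → ℕ)) (l₂ : (Fin kk → ℕ) × (Fin ll → ℕ)),
        s' = ⟨L.comp M, mmk c' a'⟩ ∧ (l₂.2 = l₁.1 ∧ lab = (l₂.1, l₁.2)) ∧
        M.WLts a l₁.1 l₁.2 a' ∧ L.WLts c l₂.1 l₂.2 c' := by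
  rw [comp_wtrans_char L M c a lab s']
  constructor
  · rintro ⟨c', a', l₂, l₁, h, ⟨hmid, hlab⟩, h2, h1⟩
    exact ⟨a', c', l₁, l₂, h, ⟨hmid, hlab⟩, h1, h2⟩
  · rintro ⟨a', c', l₁, l₂, h, ⟨hmid, hlab⟩, h1, h2⟩
    exact ⟨c', a', l₂, l₁, h, ⟨hmid, hlab⟩, h2, h1⟩

theorem tensor_wtrans_char {kk ll mm nn : ℕ} (M : PTNet kk ll) (R : PTNet mm nn)
    (a : Multiset M.P) (c : Multiset R.P)
    (lab : (Fin (kk + mm) → ℕ) × (Fin (ll + nn) → ℕ)) (s' : PTState (kk + mm) (ll + nn)) :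
    ptWTrans (kk + mm) (ll + nn) ⟨M.tensor R, mmk a c⟩ lab s' ↔
      ∃ (a' : _) (c' : _) (l₁ : (Fin kk → ℕ) × (Fin ll → ℕ)) (l₂ : (Fin mm → ℕ) × (Fin nn → ℕ)),
        s' = ⟨M.tensor R, mmk a' c'⟩ ∧ (lab = (hcomb l₁.1 l₂.1, hcomb l₁.2 l₂.2)) ∧
        M.WLts a l₁.1 l₁.2 a' ∧ R.WLts c l₂.1 l₂.2 c' := by
  constructor
  · rintro ⟨Y, hY, rfl⟩
    obtain ⟨a', c', α₁, β₁, α₂, β₂, rfl, hα, hβ, h1, h2⟩ :=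
      (tensor_wlts_iff M R a c lab.1 lab.2 Y).1 hY
    exact ⟨a', c', (α₁, β₁), (α₂, β₂), rfl, by rw [← hα, ← hβ], h1, h2⟩
  · rintro ⟨a', c', l₁, l₂, rfl, hlab, h1, h2⟩
    refine ⟨mmk a' c', ?_, rfl⟩
    rw [hlab]
    exact (tensor_wlts_iff M R a c _ _ _).2
      ⟨a', c', l₁.1, l₁.2, l₂.1, l₂.2, rfl, rfl, rfl, h1, h2⟩

theorem tensor_wtrans_char' {kk ll mm nn : ℕ} (R : PTNet kk ll) (M : PTNet mm nn)
    (a : Multiset M.P) (c : Multiset R.P)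
    (lab : (Fin (kk + mm) → ℕ) × (Fin (ll + nn) → ℕ)) (s' : PTState (kk + mm) (ll + nn)) :
    ptWTrans (kk + mm) (ll + nn) ⟨R.tensor M, mmk c a⟩ lab s' ↔
      ∃ (a' : _) (c' : _) (l₁ : (Fin mm → ℕ) × (Fin nn → ℕ)) (l₂ : (Fin kk → ℕ) × (Fin ll → ℕ)),
        s' = ⟨R.tensor M, mmk c' a'⟩ ∧ (lab = (hcomb l₂.1 l₁.1, hcomb l₂.2 l₁.2)) ∧
        M.WLts a l₁.1 l₁.2 a' ∧ R.WLts c l₂.1 l₂.2 c' := by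
  rw [tensor_wtrans_char R M c a lab s']
  constructor
  · rintro ⟨c', a', l₂, l₁, h, hlab, h2, h1⟩
    exact ⟨a', c', l₁, l₂, h, hlab, h1, h2⟩
  · rintro ⟨a', c', l₁, l₂, h, hlab, h1, h2⟩
    exact ⟨c', a', l₂, l₁, h, hlab, h2, h1⟩

end PTNet
namespace PTNet

theorem ptSbisim_transfer {mm nn : ℕ} {M₁ M₂ : PTNet mm nn}
    {R₀ : PTState mm nn → PTState mm nn → Prop}
    (hb : IsBisimulation (ptSTrans mm nn) R₀)
    (a : Multiset M₁.P) (b : Multiset M₂.P) (hab : R₀ ⟨M₁, a⟩ ⟨M₂, b⟩) :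
    (∀ (l : (Fin mm → ℕ) × (Fin nn → ℕ)) a', M₁.SLts a l.1 l.2 a' →
        ∃ b', M₂.SLts b l.1 l.2 b' ∧ R₀ ⟨M₁, a'⟩ ⟨M₂, b'⟩) ∧
    (∀ (l : (Fin mm → ℕ) × (Fin nn → ℕ)) b', M₂.SLts b l.1 l.2 b' →
        ∃ a', M₁.SLts a l.1 l.2 a' ∧ R₀ ⟨M₁, a'⟩ ⟨M₂, b'⟩) := by
  constructor
  · intro l a' h
    obtain ⟨q', hq', hR⟩ := (hb _ _ hab).1 l ⟨M₁, a'⟩ ⟨a', h, rfl⟩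
    obtain ⟨b', hb', rfl⟩ := hq'
    exact ⟨b', hb', hR⟩
  · intro l b' h
    obtain ⟨p', hp', hR⟩ := (hb _ _ hab).2 l ⟨M₂, b'⟩ ⟨b', h, rfl⟩
    obtain ⟨a', ha', rfl⟩ := hp'
    exact ⟨a', ha', hR⟩

theorem ptWbisim_transfer {mm nn : ℕ} {M₁ M₂ : PTNet mm nn}
    {R₀ : PTState mm nn → PTState mm nn → Prop}
    (hb : IsBisimulation (ptWTrans mm nn) R₀)
    (a : Multiset M₁.P) (b : Multiset M₂.P) (hab : R₀ ⟨M₁, a⟩ ⟨M₂, b⟩) :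
    (∀ (l : (Fin mm → ℕ) × (Fin nn → ℕ)) a', M₁.WLts a l.1 l.2 a' →
        ∃ b', M₂.WLts b l.1 l.2 b' ∧ R₀ ⟨M₁, a'⟩ ⟨M₂, b'⟩) ∧
    (∀ (l : (Fin mm → ℕ) × (Fin nn → ℕ)) b', M₂.WLts b l.1 l.2 b' →
        ∃ a', M₁.WLts a l.1 l.2 a' ∧ R₀ ⟨M₁, a'⟩ ⟨M₂, b'⟩) := by
  constructor
  · intro l a' h
    obtain ⟨q', hq', hR⟩ := (hb _ _ hab).1 l ⟨M₁, a'⟩ ⟨a', h, rfl⟩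
    obtain ⟨b', hb', rfl⟩ := hq'
    exact ⟨b', hb', hR⟩
  · intro l b' h
    obtain ⟨p', hp', hR⟩ := (hb _ _ hab).2 l ⟨M₂, b'⟩ ⟨b', h, rfl⟩
    obtain ⟨a', ha', rfl⟩ := hp'
    exact ⟨a', ha', hR⟩

end PTNet

namespace CENet

variable {k l m n : ℕ}

@[simp] theorem mem_mk2_inl {A B : Type} (a : Set A) (b : Set B) (x : A) :
    Sum.inl x ∈ mk2 a b ↔ x ∈ a := by simp [mk2]

@[simp] theorem mem_mk2_inr {A B : Type} (a : Set A) (b : Set B) (x : B) :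
    Sum.inr x ∈ mk2 a b ↔ x ∈ b := by simp [mk2]

theorem exists_mk2 {A B : Type} (U : Set (A ⊕ B)) : ∃ a b, U = mk2 a b := by
  refine ⟨Sum.inl ⁻¹' U, Sum.inr ⁻¹' U, ?_⟩
  ext x
  rcases x with x | x <;> simp

theorem mk2_subset_mk2 {A B : Type} {a c : Set A} {b d : Set B} :
    mk2 a b ⊆ mk2 c d ↔ a ⊆ c ∧ b ⊆ d := by
  constructor
  · intro h
    constructor
    · intro x hx
      have := h (show Sum.inl x ∈ mk2 a b from by simpa)
      simpa using this
    · intro x hx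
      have := h (show Sum.inr x ∈ mk2 a b from by simpa)
      simpa using this
  · rintro ⟨h1, h2⟩ x hx
    rcases x with x | x
    · simp only [mem_mk2_inl] at hx ⊢; exact h1 hx
    · simp only [mem_mk2_inr] at hx ⊢; exact h2 hx

theorem mk2_eq_mk2 {A B : Type} {a c : Set A} {b d : Set B} :
    mk2 a b = mk2 c d ↔ a = c ∧ b = d := by
  constructor
  · intro h
    constructor
    · ext x; have := Set.ext_iff.1 h (Sum.inl x); simpa using this
    · ext x; have := Set.ext_iff.1 h (Sum.inr x); simpa using this
  · rintro ⟨rfl, rfl⟩; rfl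

theorem mk2_union {A B : Type} (a a' : Set A) (b b' : Set B) :
    mk2 (a ∪ a') (b ∪ b') = mk2 a b ∪ mk2 a' b' := by
  ext x; rcases x with x | x <;> simp

theorem mk2_diff {A B : Type} (a c : Set A) (b d : Set B) :
    mk2 a b \ mk2 c d = mk2 (a \ c) (b \ d) := by
  ext x; rcases x with x | x <;> simp

theorem mk2_inter_empty {A B : Type} {a c : Set A} {b d : Set B} :
    mk2 a b ∩ mk2 c d = ∅ ↔ a ∩ c = ∅ ∧ b ∩ d = ∅ := by
  simp only [Set.eq_empty_iff_forall_notMem]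
  constructor
  · intro h
    exact ⟨fun x hx => h (Sum.inl x) (by simpa using hx),
      fun x hx => h (Sum.inr x) (by simpa using hx)⟩
  · rintro ⟨h1, h2⟩ x hx
    rcases x with x | x <;> simp at hx
    exacts [h1 x (by simp [Set.mem_inter_iff, hx.1, hx.2]),
      h2 x (by simp [Set.mem_inter_iff, hx.1, hx.2])]

section TensorCE

variable (M : CENet k l) (R : CENet m n)

@[simp] theorem tensor_pre_inl (t : M.T) :
    (M.tensor R).pre (Sum.inl t) = Sum.inl '' M.pre t := rfl
@[simp] theorem tensor_pre_inr (t : R.T) :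
    (M.tensor R).pre (Sum.inr t) = Sum.inr '' R.pre t := rfl
@[simp] theorem tensor_post_inl (t : M.T) :
    (M.tensor R).post (Sum.inl t) = Sum.inl '' M.post t := rfl
@[simp] theorem tensor_post_inr (t : R.T) :
    (M.tensor R).post (Sum.inr t) = Sum.inr '' R.post t := rfl
@[simp] theorem tensor_src_inl (t : M.T) :
    (M.tensor R).src (Sum.inl t) = Fin.castAdd m '' M.src t := rfl
@[simp] theorem tensor_src_inr (t : R.T) :
    (M.tensor R).src (Sum.inr t) = Fin.natAdd k '' R.src t := rfl
@[simp] theorem tensor_tgt_inl (t : M.T) :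
    (M.tensor R).tgt (Sum.inl t) = Fin.castAdd n '' M.tgt t := rfl
@[simp] theorem tensor_tgt_inr (t : R.T) :
    (M.tensor R).tgt (Sum.inr t) = Fin.natAdd l '' R.tgt t := rfl

theorem tensor_preS (U₁ : Set M.T) (U₂ : Set R.T) :
    (M.tensor R).preS (mk2 U₁ U₂) = mk2 (M.preS U₁) (R.preS U₂) := by
  unfold preS mk2
  erw [Set.biUnion_union, Set.biUnion_image, Set.biUnion_image]
  simp only [tensor_pre_inl, tensor_pre_inr, ← Set.image_iUnion₂]; erw [Set.image_iUnion₂, Set.image_iUnion₂]; rfl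

theorem tensor_postS (U₁ : Set M.T) (U₂ : Set R.T) :
    (M.tensor R).postS (mk2 U₁ U₂) = mk2 (M.postS U₁) (R.postS U₂) := by
  unfold postS mk2
  erw [Set.biUnion_union, Set.biUnion_image, Set.biUnion_image]
  simp only [tensor_post_inl, tensor_post_inr, ← Set.image_iUnion₂]; erw [Set.image_iUnion₂, Set.image_iUnion₂]; rfl

/-- Glued boundary labels for C/E nets. -/
def scomb {k m : ℕ} (α₁ : Set (Fin k)) (α₂ : Set (Fin m)) : Set (Fin (k + m)) :=
  Fin.castAdd m '' α₁ ∪ Fin.natAdd k '' α₂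

theorem tensor_srcS (U₁ : Set M.T) (U₂ : Set R.T) :
    (M.tensor R).srcS (mk2 U₁ U₂) = scomb (M.srcS U₁) (R.srcS U₂) := by
  unfold srcS mk2 scomb
  erw [Set.biUnion_union, Set.biUnion_image, Set.biUnion_image]
  simp only [tensor_src_inl, tensor_src_inr, ← Set.image_iUnion₂]

theorem tensor_tgtS (U₁ : Set M.T) (U₂ : Set R.T) :
    (M.tensor R).tgtS (mk2 U₁ U₂) = scomb (M.tgtS U₁) (R.tgtS U₂) := by
  unfold tgtS mk2 scomb
  erw [Set.biUnion_union, Set.biUnion_image, Set.biUnion_image]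
  simp only [tensor_tgt_inl, tensor_tgt_inr, ← Set.image_iUnion₂]

theorem tensor_mutInd (U₁ : Set M.T) (U₂ : Set R.T) :
    (M.tensor R).MutInd (mk2 U₁ U₂) ↔ M.MutInd U₁ ∧ R.MutInd U₂ := by
  constructor
  · intro h
    refine ⟨fun t ht u hu hne hc => ?_, fun t ht u hu hne hc => ?_⟩
    · exact h (Sum.inl t) ((mem_mk2_inl _ _ _).2 ht) (Sum.inl u)
        ((mem_mk2_inl _ _ _).2 hu) (fun he => hne (Sum.inl.inj he))
        (Or.inl ⟨t, u, rfl, rfl, hc⟩)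
    · exact h (Sum.inr t) ((mem_mk2_inr _ _ _).2 ht) (Sum.inr u)
        ((mem_mk2_inr _ _ _).2 hu) (fun he => hne (Sum.inr.inj he))
        (Or.inr ⟨t, u, rfl, rfl, hc⟩)
  · rintro ⟨h1, h2⟩ t ht u hu hne hc
    rcases hc with ⟨a, b, rfl, rfl, hc⟩ | ⟨a, b, rfl, rfl, hc⟩
    · exact h1 a ((mem_mk2_inl _ _ _).1 ht) b ((mem_mk2_inl _ _ _).1 hu)
        (fun he => hne (he ▸ rfl)) hc
    · exact h2 a ((mem_mk2_inr _ _ _).1 ht) b ((mem_mk2_inr _ _ _).1 hu)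
        (fun he => hne (he ▸ rfl)) hc

theorem tensor_lts_iff (X : Set M.P) (Z : Set R.P) (α : Set (Fin (k + m)))
    (β : Set (Fin (l + n))) (Y : Set (M.tensor R).P) :
    (M.tensor R).Lts (mk2 X Z) α β Y ↔
      ∃ X' Z' α₁ β₁ α₂ β₂, Y = mk2 X' Z' ∧ α = scomb α₁ α₂ ∧ β = scomb β₁ β₂ ∧
        M.Lts X α₁ β₁ X' ∧ R.Lts Z α₂ β₂ Z' := by
  constructor
  · rintro ⟨U, ⟨hMI, hpre, hpost, hY⟩, hα, hβ⟩
    obtain ⟨U₁, U₂, rfl⟩ := exists_mk2 U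
    rw [tensor_mutInd] at hMI
    erw [tensor_preS, mk2_subset_mk2] at hpre
    erw [tensor_postS, mk2_inter_empty] at hpost
    erw [tensor_preS, tensor_postS, mk2_diff, ← mk2_union] at hY
    refine ⟨(X \ M.preS U₁) ∪ M.postS U₁, (Z \ R.preS U₂) ∪ R.postS U₂,
      M.srcS U₁, M.tgtS U₁, R.srcS U₂, R.tgtS U₂, hY, ?_, ?_, ?_, ?_⟩
    · rw [hα, tensor_srcS]
    · rw [hβ, tensor_tgtS]
    · exact ⟨U₁, ⟨hMI.1, hpre.1, hpost.1, rfl⟩, rfl, rfl⟩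
    · exact ⟨U₂, ⟨hMI.2, hpre.2, hpost.2, rfl⟩, rfl, rfl⟩
  · rintro ⟨X', Z', α₁, β₁, α₂, β₂, rfl, hα, hβ,
      ⟨U₁, ⟨hMI1, hpre1, hpost1, hY1⟩, hα1, hβ1⟩,
      ⟨U₂, ⟨hMI2, hpre2, hpost2, hY2⟩, hα2, hβ2⟩⟩
    refine ⟨mk2 U₁ U₂, ⟨?_, ?_, ?_, ?_⟩, ?_, ?_⟩
    · exact (tensor_mutInd M R U₁ U₂).2 ⟨hMI1, hMI2⟩
    · erw [tensor_preS, mk2_subset_mk2]; exact ⟨hpre1, hpre2⟩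
    · erw [tensor_postS, mk2_inter_empty]; exact ⟨hpost1, hpost2⟩
    · erw [tensor_preS, tensor_postS, mk2_diff, ← mk2_union, ← hY1, ← hY2]
    · rw [hα, tensor_srcS, hα1, hα2]
    · rw [hβ, tensor_tgtS, hβ1, hβ2]

end TensorCE

end CENet
namespace CENet

theorem tensor_cetrans_char {kk ll mm nn : ℕ} (M : CENet kk ll) (R : CENet mm nn)
    (a : Set M.P) (c : Set R.P)
    (lab : Set (Fin (kk + mm)) × Set (Fin (ll + nn))) (s' : CEState (kk + mm) (ll + nn)) :
    ceTrans (kk + mm) (ll + nn) ⟨M.tensor R, mk2 a c⟩ lab s' ↔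
      ∃ (a' : _) (c' : _) (l₁ : Set (Fin kk) × Set (Fin ll)) (l₂ : Set (Fin mm) × Set (Fin nn)),
        s' = ⟨M.tensor R, mk2 a' c'⟩ ∧ (lab = (scomb l₁.1 l₂.1, scomb l₁.2 l₂.2)) ∧
        M.Lts a l₁.1 l₁.2 a' ∧ R.Lts c l₂.1 l₂.2 c' := by
  constructor
  · rintro ⟨Y, hY, rfl⟩
    obtain ⟨a', c', α₁, β₁, α₂, β₂, rfl, hα, hβ, h1, h2⟩ :=
      (tensor_lts_iff M R a c lab.1 lab.2 Y).1 hY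
    exact ⟨a', c', (α₁, β₁), (α₂, β₂), rfl, by rw [← hα, ← hβ], h1, h2⟩
  · rintro ⟨a', c', l₁, l₂, rfl, hlab, h1, h2⟩
    refine ⟨mk2 a' c', ?_, rfl⟩
    rw [hlab]
    exact (tensor_lts_iff M R a c _ _ _).2
      ⟨a', c', l₁.1, l₁.2, l₂.1, l₂.2, rfl, rfl, rfl, h1, h2⟩

theorem tensor_cetrans_char' {kk ll mm nn : ℕ} (R : CENet kk ll) (M : CENet mm nn)
    (a : Set M.P) (c : Set R.P)
    (lab : Set (Fin (kk + mm)) × Set (Fin (ll + nn))) (s' : CEState (kk + mm) (ll + nn)) :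
    ceTrans (kk + mm) (ll + nn) ⟨R.tensor M, mk2 c a⟩ lab s' ↔
      ∃ (a' : _) (c' : _) (l₁ : Set (Fin mm) × Set (Fin nn)) (l₂ : Set (Fin kk) × Set (Fin ll)),
        s' = ⟨R.tensor M, mk2 c' a'⟩ ∧ (lab = (scomb l₂.1 l₁.1, scomb l₂.2 l₁.2)) ∧
        M.Lts a l₁.1 l₁.2 a' ∧ R.Lts c l₂.1 l₂.2 c' := by
  rw [tensor_cetrans_char R M c a lab s']
  constructor
  · rintro ⟨c', a', l₂, l₁, h, hlab, h2, h1⟩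
    exact ⟨a', c', l₁, l₂, h, hlab, h1, h2⟩
  · rintro ⟨a', c', l₁, l₂, h, hlab, h1, h2⟩
    exact ⟨c', a', l₂, l₁, h, hlab, h2, h1⟩

theorem cebisim_transfer {mm nn : ℕ} {M₁ M₂ : CENet mm nn}
    {R₀ : CEState mm nn → CEState mm nn → Prop}
    (hb : IsBisimulation (ceTrans mm nn) R₀)
    (a : Set M₁.P) (b : Set M₂.P) (hab : R₀ ⟨M₁, a⟩ ⟨M₂, b⟩) :
    (∀ (l : Set (Fin mm) × Set (Fin nn)) a', M₁.Lts a l.1 l.2 a' →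
        ∃ b', M₂.Lts b l.1 l.2 b' ∧ R₀ ⟨M₁, a'⟩ ⟨M₂, b'⟩) ∧
    (∀ (l : Set (Fin mm) × Set (Fin nn)) b', M₂.Lts b l.1 l.2 b' →
        ∃ a', M₁.Lts a l.1 l.2 a' ∧ R₀ ⟨M₁, a'⟩ ⟨M₂, b'⟩) := by
  constructor
  · intro l a' h
    obtain ⟨q', hq', hR⟩ := (hb _ _ hab).1 l ⟨M₁, a'⟩ ⟨a', h, rfl⟩
    obtain ⟨b', hb', rfl⟩ := hq'
    exact ⟨b', hb', hR⟩
  · intro l b' h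
    obtain ⟨p', hp', hR⟩ := (hb _ _ hab).2 l ⟨M₂, b'⟩ ⟨b', h, rfl⟩
    obtain ⟨a', ha', rfl⟩ := hp'
    exact ⟨a', ha', hR⟩

end CENet
/-- Proposition `ptnetcongruence`: bisimilarity of C/E nets
with boundaries is a congruence w.r.t. the tensor product `⊗`, and both strong
and weak bisimilarity of P/T nets with boundaries are congruences w.r.t.
composition `;` and tensor `⊗` (on either side). -/
theorem stmt7 :
    -- C/E nets: tensor congruence
    (∀ (k l m n : ℕ) (M₁ M₂ : CENet k l) (R : CENet m n),
       M₁.Valid → M₂.Valid → R.Valid →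
       ∀ (X₁ : Set M₁.P) (X₂ : Set M₂.P) (Z : Set R.P),
         Bisimilar (ceTrans k l) ⟨M₁, X₁⟩ ⟨M₂, X₂⟩ →
         Bisimilar (ceTrans (k + m) (l + n))
           ⟨M₁.tensor R, CENet.mk2 X₁ Z⟩ ⟨M₂.tensor R, CENet.mk2 X₂ Z⟩ ∧
         Bisimilar (ceTrans (m + k) (n + l))
           ⟨R.tensor M₁, CENet.mk2 Z X₁⟩ ⟨R.tensor M₂, CENet.mk2 Z X₂⟩) ∧
    -- P/T nets, strong semantics: composition and tensor congruence
    (∀ (k l : ℕ) (M₁ M₂ : PTNet k l),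
       M₁.Valid → M₂.Valid →
       ∀ (X₁ : Multiset M₁.P) (X₂ : Multiset M₂.P),
         Bisimilar (ptSTrans k l) ⟨M₁, X₁⟩ ⟨M₂, X₂⟩ →
         (∀ (m : ℕ) (R : PTNet l m), R.Valid → ∀ Z : Multiset R.P,
            Bisimilar (ptSTrans k m)
              ⟨M₁.comp R, PTNet.mmk X₁ Z⟩ ⟨M₂.comp R, PTNet.mmk X₂ Z⟩) ∧
         (∀ (m : ℕ) (L : PTNet m k), L.Valid → ∀ W : Multiset L.P,
            Bisimilar (ptSTrans m l)
              ⟨L.comp M₁, PTNet.mmk W X₁⟩ ⟨L.comp M₂, PTNet.mmk W X₂⟩) ∧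
         (∀ (m n : ℕ) (R : PTNet m n), R.Valid → ∀ Z : Multiset R.P,
            Bisimilar (ptSTrans (k + m) (l + n))
              ⟨M₁.tensor R, PTNet.mmk X₁ Z⟩ ⟨M₂.tensor R, PTNet.mmk X₂ Z⟩ ∧
            Bisimilar (ptSTrans (m + k) (n + l))
              ⟨R.tensor M₁, PTNet.mmk Z X₁⟩ ⟨R.tensor M₂, PTNet.mmk Z X₂⟩)) ∧
    -- P/T nets, weak semantics: composition and tensor congruence
    (∀ (k l : ℕ) (M₁ M₂ : PTNet k l),
       M₁.Valid → M₂.Valid →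
       ∀ (X₁ : Multiset M₁.P) (X₂ : Multiset M₂.P),
         Bisimilar (ptWTrans k l) ⟨M₁, X₁⟩ ⟨M₂, X₂⟩ →
         (∀ (m : ℕ) (R : PTNet l m), R.Valid → ∀ Z : Multiset R.P,
            Bisimilar (ptWTrans k m)
              ⟨M₁.comp R, PTNet.mmk X₁ Z⟩ ⟨M₂.comp R, PTNet.mmk X₂ Z⟩) ∧
         (∀ (m : ℕ) (L : PTNet m k), L.Valid → ∀ W : Multiset L.P,
            Bisimilar (ptWTrans m l)
              ⟨L.comp M₁, PTNet.mmk W X₁⟩ ⟨L.comp M₂, PTNet.mmk W X₂⟩) ∧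
         (∀ (m n : ℕ) (R : PTNet m n), R.Valid → ∀ Z : Multiset R.P,
            Bisimilar (ptWTrans (k + m) (l + n))
              ⟨M₁.tensor R, PTNet.mmk X₁ Z⟩ ⟨M₂.tensor R, PTNet.mmk X₂ Z⟩ ∧
            Bisimilar (ptWTrans (m + k) (n + l))
              ⟨R.tensor M₁, PTNet.mmk Z X₁⟩ ⟨R.tensor M₂, PTNet.mmk Z X₂⟩)) := by
  refine ⟨?_, ?_, ?_⟩
  · intro k l m n M₁ M₂ R _ _ _ X₁ X₂ Z hbis
    obtain ⟨R₀, hb, h₀⟩ := hbis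
    constructor
    · exact bisim_glue (ceTrans (k + m) (l + n)) _ _ _ _ _ _
        (CENet.tensor_cetrans_char M₁ R) (CENet.tensor_cetrans_char M₂ R)
        (fun a b => R₀ ⟨M₁, a⟩ ⟨M₂, b⟩)
        (fun a b hab => CENet.cebisim_transfer hb a b hab) X₁ X₂ Z h₀
    · exact bisim_glue (ceTrans (m + k) (n + l)) _ _ _ _ _ _
        (CENet.tensor_cetrans_char' R M₁) (CENet.tensor_cetrans_char' R M₂)
        (fun a b => R₀ ⟨M₁, a⟩ ⟨M₂, b⟩)
        (fun a b hab => CENet.cebisim_transfer hb a b hab) X₁ X₂ Z h₀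
  · intro k l M₁ M₂ _ _ X₁ X₂ hbis
    obtain ⟨R₀, hb, h₀⟩ := hbis
    refine ⟨?_, ?_, ?_⟩
    · intro m R _ Z
      exact bisim_glue (ptSTrans k m) _ _ _ _ _ _
        (PTNet.comp_strans_char M₁ R) (PTNet.comp_strans_char M₂ R)
        (fun a b => R₀ ⟨M₁, a⟩ ⟨M₂, b⟩)
        (fun a b hab => PTNet.ptSbisim_transfer hb a b hab) X₁ X₂ Z h₀
    · intro m L _ W
      exact bisim_glue (ptSTrans m l) _ _ _ _ _ _
        (PTNet.comp_strans_char' L M₁) (PTNet.comp_strans_char' L M₂)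
        (fun a b => R₀ ⟨M₁, a⟩ ⟨M₂, b⟩)
        (fun a b hab => PTNet.ptSbisim_transfer hb a b hab) X₁ X₂ W h₀
    · intro m n R _ Z
      constructor
      · exact bisim_glue (ptSTrans (k + m) (l + n)) _ _ _ _ _ _
          (PTNet.tensor_strans_char M₁ R) (PTNet.tensor_strans_char M₂ R)
          (fun a b => R₀ ⟨M₁, a⟩ ⟨M₂, b⟩)
          (fun a b hab => PTNet.ptSbisim_transfer hb a b hab) X₁ X₂ Z h₀
      · exact bisim_glue (ptSTrans (m + k) (n + l)) _ _ _ _ _ _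
          (PTNet.tensor_strans_char' R M₁) (PTNet.tensor_strans_char' R M₂)
          (fun a b => R₀ ⟨M₁, a⟩ ⟨M₂, b⟩)
          (fun a b hab => PTNet.ptSbisim_transfer hb a b hab) X₁ X₂ Z h₀
  · intro k l M₁ M₂ _ _ X₁ X₂ hbis
    obtain ⟨R₀, hb, h₀⟩ := hbis
    refine ⟨?_, ?_, ?_⟩
    · intro m R _ Z
      exact bisim_glue (ptWTrans k m) _ _ _ _ _ _
        (PTNet.comp_wtrans_char M₁ R) (PTNet.comp_wtrans_char M₂ R)
        (fun a b => R₀ ⟨M₁, a⟩ ⟨M₂, b⟩)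
        (fun a b hab => PTNet.ptWbisim_transfer hb a b hab) X₁ X₂ Z h₀
    · intro m L _ W
      exact bisim_glue (ptWTrans m l) _ _ _ _ _ _
        (PTNet.comp_wtrans_char' L M₁) (PTNet.comp_wtrans_char' L M₂)
        (fun a b => R₀ ⟨M₁, a⟩ ⟨M₂, b⟩)
        (fun a b hab => PTNet.ptWbisim_transfer hb a b hab) X₁ X₂ W h₀
    · intro m n R _ Z
      constructor
      · exact bisim_glue (ptWTrans (k + m) (l + n)) _ _ _ _ _ _
          (PTNet.tensor_wtrans_char M₁ R) (PTNet.tensor_wtrans_char M₂ R)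
          (fun a b => R₀ ⟨M₁, a⟩ ⟨M₂, b⟩)
          (fun a b hab => PTNet.ptWbisim_transfer hb a b hab) X₁ X₂ Z h₀
      · exact bisim_glue (ptWTrans (m + k) (n + l)) _ _ _ _ _ _
          (PTNet.tensor_wtrans_char' R M₁) (PTNet.tensor_wtrans_char' R M₂)
          (fun a b => R₀ ⟨M₁, a⟩ ⟨M₂, b⟩)
          (fun a b hab => PTNet.ptWbisim_transfer hb a b hab) X₁ X₂ Z h₀
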